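/- arXiv:2106.00664 — 5 statements merged into one kernel-verified Lean document; each statement's English description precedes it below -/
import Mathlib

section
/- Let S be a type, Init Bad : Set S, and Tr : S → S → Prop, and let F_0, ..., F_N ⊆ S be a monotone inductive trace, i.e. Init ⊆ F_0, post(F_i) ⊆ F_{i+1}, and F_i ⊆ F_{i+1} for all 0 ≤ i < N. If F_N ∩ Bad = ∅, then the transition system has no counterexample of length k for any k ≤ N. -/
/-- A monotone inductive trace whose last frame excludes Bad rules out all counterexamples
of length at most N. -/
theorem trace_no_short_cex {S : Type*} (Init Bad : Set S) (Tr : S → S → Prop)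
    (N : ℕ) (F : ℕ → Set S)
    (hInit : Init ⊆ F 0)
    (hPost : ∀ i < N, {y | ∃ x ∈ F i, Tr x y} ⊆ F (i + 1))
    (hMono : ∀ i < N, F i ⊆ F (i + 1))
    (hBad : F N ∩ Bad = ∅) :
    ∀ k ≤ N, ¬ ∃ x : ℕ → S, x 0 ∈ Init ∧ (∀ i < k, Tr (x i) (x (i + 1))) ∧ x k ∈ Bad := by
  intro k hk ⟨x, hx0, hstep, hxk⟩
  have hF : ∀ i ≤ k, x i ∈ F i := by
    intro i hi
    induction i with
    | zero => exact hInit hx0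
    | succ n ih =>
      have hn : n < k := Nat.lt_of_succ_le hi
      exact hPost n (lt_of_lt_of_le hn hk) ⟨x n, ih (Nat.le_of_lt hn), hstep n hn⟩
  have hchain : ∀ j, k ≤ j → j ≤ N → x k ∈ F j := by
    intro j hj hjN
    induction j with
    | zero => exact Nat.le_zero.mp hj ▸ hF k le_rfl
    | succ m ih =>
      rcases Nat.lt_or_ge m k with h | h
      · have : k = m + 1 := Nat.le_antisymm hj (Nat.succ_le_of_lt h)
        exact this ▸ hF k le_rfl
      · exact hMono m (Nat.lt_of_succ_le hjN) (ih h (Nat.le_of_succ_le hjN))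
  have : x k ∈ F N ∩ Bad := ⟨hchain N hk le_rfl, hxk⟩
  rw [hBad] at this
  exact this
end

section
/- Let S be a type, Init Bad : Set S, and Tr : S → S → Prop, and let F_0, ..., F_N ⊆ S be a monotone inductive trace (Init ⊆ F_0, post(F_i) ⊆ F_{i+1}, F_i ⊆ F_{i+1} for all 0 ≤ i < N) such that F_j ∩ Bad = ∅ for every j ≤ N. If there is an index i < N with F_{i+1} ⊆ F_i, then F_i is an inductive invariant (Init ⊆ F_i, post(F_i) ⊆ F_i, F_i ∩ Bad = ∅) and the transition system is safe. -/
/-- Soundness of the Safe rule: if two consecutive frames of a monotone inductive trace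
coincide, the frame is an inductive invariant and the system is safe. -/
theorem safe_rule_sound {S : Type*} (Init Bad : Set S) (Tr : S → S → Prop)
    (N : ℕ) (F : ℕ → Set S)
    (hInit : Init ⊆ F 0)
    (hPost : ∀ i < N, {y | ∃ x ∈ F i, Tr x y} ⊆ F (i + 1))
    (hMono : ∀ i < N, F i ⊆ F (i + 1))
    (hBad : ∀ j ≤ N, F j ∩ Bad = ∅)
    (i : ℕ) (hi : i < N) (hEq : F (i + 1) ⊆ F i) :
    (Init ⊆ F i ∧ {y | ∃ x ∈ F i, Tr x y} ⊆ F i ∧ F i ∩ Bad = ∅) ∧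
    ∀ k : ℕ, ¬ ∃ x : ℕ → S, x 0 ∈ Init ∧ (∀ l < k, Tr (x l) (x (l + 1))) ∧ x k ∈ Bad := by
  have h0 : ∀ j ≤ N, F 0 ⊆ F j := by
    intro j hj
    induction j with
    | zero => exact subset_rfl
    | succ n ih =>
      exact (ih (Nat.le_of_succ_le hj)).trans (hMono n (Nat.lt_of_succ_le hj))
  have hInit' : Init ⊆ F i := hInit.trans (h0 i hi.le)
  have hPost' : {y | ∃ x ∈ F i, Tr x y} ⊆ F i := fun y hy => hEq (hPost i hi hy)
  have hBad' : F i ∩ Bad = ∅ := hBad i (Nat.le_of_lt hi)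
  refine ⟨⟨hInit', hPost', hBad'⟩, ?_⟩
  intro k ⟨x, hx0, hstep, hxk⟩
  have hmem : ∀ l ≤ k, x l ∈ F i := by
    intro l hl
    induction l with
    | zero => exact hInit' hx0
    | succ n ih =>
      exact hPost' ⟨x n, ih (Nat.le_of_succ_le hl), hstep n (Nat.lt_of_succ_le hl)⟩
  have : x k ∈ F i ∩ Bad := ⟨hmem k le_rfl, hxk⟩
  rw [hBad'] at this
  exact this
end

section
/- Let S be a type, Init : Set S, and Tr : S → S → Prop, and let F_0, ..., F_N ⊆ S be a monotone inductive trace (Init ⊆ F_0, post(F_i) ⊆ F_{i+1}, F_i ⊆ F_{i+1} for all 0 ≤ i < N). Fix i < N and let L ⊆ S be a set such that Init ⊆ L and post(F_i ∩ L) ⊆ L. Define G_j = F_j ∩ L for j ≤ i+1 and G_j = F_j for i+1 < j ≤ N. Then G_0, ..., G_N is again a monotone inductive trace: Init ⊆ G_0, post(G_j) ⊆ G_{j+1}, and G_j ⊆ G_{j+1} for all 0 ≤ j < N. -/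
/-- Soundness of the Push rule: intersecting all frames up to i+1 with a lemma L satisfying
Init ⊆ L and post(F i ∩ L) ⊆ L preserves the monotone inductive trace properties. -/
theorem push_rule_sound {S : Type*} (Init : Set S) (Tr : S → S → Prop)
    (N : ℕ) (F : ℕ → Set S)
    (hInit : Init ⊆ F 0)
    (hPost : ∀ i < N, {y | ∃ x ∈ F i, Tr x y} ⊆ F (i + 1))
    (hMono : ∀ i < N, F i ⊆ F (i + 1))
    (i : ℕ) (hi : i < N) (L : Set S)
    (hLInit : Init ⊆ L)
    (hLInd : {y | ∃ x ∈ F i ∩ L, Tr x y} ⊆ L) :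
    let G : ℕ → Set S := fun j => if j ≤ i + 1 then F j ∩ L else F j
    Init ⊆ G 0 ∧ (∀ j < N, {y | ∃ x ∈ G j, Tr x y} ⊆ G (j + 1)) ∧
      (∀ j < N, G j ⊆ G (j + 1)) := by
  intro G
  have hChain : ∀ a b : ℕ, a ≤ b → b ≤ N → F a ⊆ F b := by
    intro a b hab hbN
    induction b with
    | zero => simp [Nat.le_zero.mp hab]
    | succ b ih =>
      rcases Nat.lt_or_ge a (b+1) with h | h
      · exact (ih (Nat.lt_succ_iff.mp h) (le_of_lt hbN)).trans
          (hMono b (lt_of_lt_of_le (Nat.lt_succ_self b) hbN))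
      · have : a = b + 1 := le_antisymm hab h
        simp [this]
  refine ⟨?_, ?_, ?_⟩
  · simp only [G, if_pos (Nat.zero_le _)]
    exact Set.subset_inter hInit hLInit
  · intro j hj
    rcases le_or_gt j i with hji | hji
    · have hG : G j = F j ∩ L := if_pos (le_trans hji (Nat.le_succ i))
      have hG' : G (j+1) = F (j+1) ∩ L := if_pos (Nat.succ_le_succ hji)
      rw [hG, hG']
      rintro y ⟨x, ⟨hxF, hxL⟩, hxy⟩
      refine ⟨hPost j hj ⟨x, hxF, hxy⟩, hLInd ⟨x, ⟨hChain j i hji (le_of_lt hi) hxF, hxL⟩, hxy⟩⟩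
    · have hG : G j ⊆ F j := by
        by_cases h : j ≤ i + 1
        · simp only [G, if_pos h]; exact Set.inter_subset_left
        · simp only [G, if_neg h]; exact subset_rfl
      have hG' : G (j+1) = F (j+1) := if_neg (by omega)
      rw [hG']
      rintro y ⟨x, hx, hxy⟩
      exact hPost j hj ⟨x, hG hx, hxy⟩
  · intro j hj
    rcases le_or_gt (j+1) (i+1) with h | h
    · simp only [G, if_pos h, if_pos (le_trans (Nat.le_succ j) h)]
      exact Set.inter_subset_inter_left L (hMono j hj)
    · have hG' : G (j+1) = F (j+1) := if_neg (by omega)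
      rw [hG']
      have hG : G j ⊆ F j := by
        by_cases h2 : j ≤ i + 1
        · simp only [G, if_pos h2]; exact Set.inter_subset_left
        · simp only [G, if_neg h2]; exact subset_rfl
      exact hG.trans (hMono j hj)
end

section
/- Let S be a type, Init : Set S, and Tr : S → S → Prop, and let F_0, ..., F_N ⊆ S be a monotone inductive trace (Init ⊆ F_0, post(F_i) ⊆ F_{i+1}, F_i ⊆ F_{i+1} for all 0 ≤ i < N). Fix i < N, let m ⊆ S be a set of states (a proof obligation at level i+1) such that (post(F_i) ∪ Init) ∩ m = ∅, and let L ⊆ S be any set with post(F_i) ∪ Init ⊆ L and L ∩ m = ∅ (an interpolant between the forward image of F_i and m). Define G_j = F_j ∩ L for j ≤ i+1 and G_j = F_j for i+1 < j ≤ N. Then G_0, ..., G_N is again a monotone inductive trace, and moreover G_{i+1} ∩ m = ∅. -/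
/-- Soundness of the NewLemma rule: an interpolant L between post(F i) ∪ Init and a blocked
proof obligation m may be added to all frames up to i+1, preserving the monotone inductive
trace properties and blocking m at frame i+1. -/
theorem newlemma_rule_sound {S : Type*} (Init : Set S) (Tr : S → S → Prop)
    (N : ℕ) (F : ℕ → Set S)
    (hInit : Init ⊆ F 0)
    (hPost : ∀ i < N, {y | ∃ x ∈ F i, Tr x y} ⊆ F (i + 1))
    (hMono : ∀ i < N, F i ⊆ F (i + 1))
    (i : ℕ) (hi : i < N) (m L : Set S)
    (hBlocked : ({y | ∃ x ∈ F i, Tr x y} ∪ Init) ∩ m = ∅)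
    (hItpL : {y | ∃ x ∈ F i, Tr x y} ∪ Init ⊆ L)
    (hItpM : L ∩ m = ∅) :
    let G : ℕ → Set S := fun j => if j ≤ i + 1 then F j ∩ L else F j
    (Init ⊆ G 0 ∧ (∀ j < N, {y | ∃ x ∈ G j, Tr x y} ⊆ G (j + 1)) ∧
      (∀ j < N, G j ⊆ G (j + 1))) ∧ G (i + 1) ∩ m = ∅ := by
  intro G
  -- F is monotone up to i
  have hChain : ∀ j ≤ i, F j ⊆ F i := by
    have key : ∀ b ≤ N, ∀ j ≤ b, F j ⊆ F b := by
      intro b hb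
      induction b with
      | zero => intro j hj; simp [Nat.le_zero.mp hj]
      | succ k ih =>
        intro j hj
        rcases Nat.lt_or_ge j (k+1) with h | h
        · exact (ih (by omega) j (Nat.lt_succ_iff.mp h)).trans (hMono k (by omega))
        · have : j = k + 1 := le_antisymm hj h
          simp [this]
    exact key i (le_of_lt hi)
  refine ⟨⟨?_, ?_, ?_⟩, ?_⟩
  · intro x hx
    have : (0:ℕ) ≤ i + 1 := Nat.zero_le _
    simp only [G, if_pos this]
    exact ⟨hInit hx, hItpL (Or.inr hx)⟩
  · intro j hj y hy
    obtain ⟨x, hx, hxy⟩ := hy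
    by_cases h1 : j ≤ i + 1
    · simp only [G, if_pos h1] at hx
      by_cases h2 : j + 1 ≤ i + 1
      · have hji : j ≤ i := Nat.lt_succ_iff.mp h2
        have hxF : x ∈ F j := hx.1
        have hyF : y ∈ F (j+1) := hPost j hj ⟨x, hxF, hxy⟩
        have hyL : y ∈ L := hItpL (Or.inl ⟨x, hChain j hji hxF, hxy⟩)
        simp only [G, if_pos h2]
        exact ⟨hyF, hyL⟩
      · simp only [G, if_neg h2]
        exact hPost j hj ⟨x, hx.1, hxy⟩
    · by_cases h2 : j + 1 ≤ i + 1
      · omega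
      · simp only [G, if_neg h1] at hx
        simp only [G, if_neg h2]
        exact hPost j hj ⟨x, hx, hxy⟩
  · intro j hj x hx
    by_cases h1 : j ≤ i + 1
    · simp only [G, if_pos h1] at hx
      by_cases h2 : j + 1 ≤ i + 1
      · simp only [G, if_pos h2]
        exact ⟨hMono j hj hx.1, hx.2⟩
      · simp only [G, if_neg h2]
        exact hMono j hj hx.1
    · have h2 : ¬ j + 1 ≤ i + 1 := by omega
      simp only [G, if_neg h1] at hx
      simp only [G, if_neg h2]
      exact hMono j hj hx
  · ext x
    simp only [G, if_pos (le_refl (i+1)), Set.mem_inter_iff, Set.mem_empty_iff_false,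
      iff_false]
    rintro ⟨⟨-, hL⟩, hm⟩
    exact (Set.eq_empty_iff_forall_notMem.mp hItpM x) ⟨hL, hm⟩
end

section
/- Let S be a type, Init Bad : Set S, and Tr : S → S → Prop, and let F_0, ..., F_N ⊆ S be a monotone inductive trace (Init ⊆ F_0, post(F_i) ⊆ F_{i+1}, F_i ⊆ F_{i+1} for all 0 ≤ i < N) with F_N ∩ Bad = ∅. Then for every j ≤ N, no state of F_{N-j} can reach Bad in exactly j transition steps; i.e., there is no sequence x_0, ..., x_j with x_0 ∈ F_{N-j}, (x_i, x_{i+1}) ∈ Tr for all 0 ≤ i < j, and x_j ∈ Bad. -/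
/-- Blocking invariant of IC3/Quic3: once Bad is excluded from frame N, frame N-j contains
no state backward-reachable from Bad in exactly j steps. -/
theorem blocking_invariant {S : Type*} (Init Bad : Set S) (Tr : S → S → Prop)
    (N : ℕ) (F : ℕ → Set S)
    (hInit : Init ⊆ F 0)
    (hPost : ∀ i < N, {y | ∃ x ∈ F i, Tr x y} ⊆ F (i + 1))
    (hMono : ∀ i < N, F i ⊆ F (i + 1))
    (hBad : F N ∩ Bad = ∅) :
    ∀ j ≤ N, ¬ ∃ x : ℕ → S, x 0 ∈ F (N - j) ∧ (∀ i < j, Tr (x i) (x (i + 1))) ∧ x j ∈ Bad := by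
  intro j hj ⟨x, h0, hstep, hbad⟩
  have key : ∀ k, k ≤ j → x k ∈ F (N - j + k) := by
    intro k
    induction k with
    | zero => intro _; simpa using h0
    | succ k ih =>
      intro hk
      have hk' : k ≤ j := Nat.le_of_succ_le hk
      have hi : N - j + k < N := by omega
      have := hPost (N - j + k) hi ⟨x k, ih hk', hstep k (by omega)⟩
      rw [← Nat.add_assoc]; exact this
  have hj' : x j ∈ F N := by
    have := key j le_rfl
    simpa [Nat.sub_add_cancel hj] using this
  have : x j ∈ F N ∩ Bad := ⟨hj', hbad⟩
  simp [hBad] at this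
end
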